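/- Let G = (V, E) be a weighted digraph with nonnegative weights satisfying Assumptions 1 and 2, let s ∈ V have no incoming edges, let t be a positive integer, and let G' be the graph obtained from G by contracting Near_t(s) into s. Then: (a) for every vertex v ∈ V \ Near_t(s), dist_G(s, v) = dist_{G'}(s, v); and (b) for all u, v ∈ V \ Near_t(s), dist_G(u, v) ≤ dist_{G'}(u, v). -/

import Mathlib

/-- A path from `s` to `t` in the digraph with edge set `E`: a finite sequence of edges
in which the head of each edge equals the tail of the next, starting at `s`, ending at `t`
(the empty sequence is a path from `s` to `s`). Paths need not be simple. -/
inductive IsPath {V : Type*} (E : Set (V × V)) : V → V → List (V × V) → Prop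
  | nil (s : V) : IsPath E s s []
  | cons {s u t : V} {P : List (V × V)} :
      (s, u) ∈ E → IsPath E u t P → IsPath E s t ((s, u) :: P)

/-- The weight of a path: the sum of its edge weights. -/
def pweight {V : Type*} (w : V × V → ℝ) (P : List (V × V)) : ℝ :=
  (P.map w).sum

/-- `distG E w u v` is the minimum weight of a path from `u` to `v`
(`+∞` if there is no such path). -/
noncomputable def distG {V : Type*} (E : Set (V × V)) (w : V × V → ℝ) (u v : V) : EReal :=
  sInf {r : EReal | ∃ P : List (V × V), IsPath E u v P ∧ r = (pweight w P : EReal)}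

/-- `v` is reachable from `u`. -/
def Reach {V : Type*} (E : Set (V × V)) (u v : V) : Prop :=
  ∃ P : List (V × V), IsPath E u v P

/-- Assumption 1: every proper (contiguous) subpath of a path has strictly smaller weight. -/
def Assumption1 {V : Type*} (E : Set (V × V)) (w : V × V → ℝ) : Prop :=
  ∀ (s t : V) (P : List (V × V)), IsPath E s t P →
    ∀ A P' B : List (V × V), P = A ++ P' ++ B → A ++ B ≠ [] →
      pweight w P' < pweight w P

/-- Assumption 2: for a fixed origin `u`, no two paths from `u` to distinct
targets have equal weight. -/
def Assumption2 {V : Type*} (E : Set (V × V)) (w : V × V → ℝ) : Prop :=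
  ∀ (u x y : V) (P₁ P₂ : List (V × V)), IsPath E u x P₁ → IsPath E u y P₂ → x ≠ y →
    pweight w P₁ ≠ pweight w P₂

/-- The edge set of the subgraph induced on the complement of `Z` (the graph `G − Z`). -/
def ERemove {V : Type*} (E : Set (V × V)) (Z : Set V) : Set (V × V) :=
  {e ∈ E | e.1 ∉ Z ∧ e.2 ∉ Z}

/-- `N` is the set of the `t` vertices distinct from `s` that are nearest to `s`
with respect to `distG` (or all vertices other than `s` reachable from `s`, if fewer
than `t` of them are reachable). -/
def IsNearSet {V : Type*} (E : Set (V × V)) (w : V × V → ℝ) (s : V) (t : ℕ)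
    (N : Finset V) : Prop :=
  s ∉ N ∧ (∀ x ∈ N, Reach E s x) ∧
  (∀ x ∈ N, ∀ y : V, y ∉ N → y ≠ s → Reach E s y → distG E w s x ≤ distG E w s y) ∧
  (N.card = t ∨ (N.card < t ∧ ∀ y : V, y ≠ s → Reach E s y → y ∈ N))

/-- `(a, b)` belongs to `E_t(a)`, i.e. it is among the `t` smallest-weight
outgoing edges of `a`. -/
def InTopT {V : Type*} (E : Set (V × V)) (w : V × V → ℝ) (t : ℕ) (a b : V) : Prop :=
  (a, b) ∈ E ∧ {c : V | (a, c) ∈ E ∧ w (a, c) < w (a, b)}.ncard < t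

/-- `(E', w')` is obtained from `(E, w)` by contracting `X` into `s`:
its vertices avoid `X`; it keeps every edge of `E` avoiding `X`, and has an edge `s → v`
whenever some `x ∈ X` has an edge `x → v` with `v ∉ X`; among the resulting parallel
edges only one of smallest weight (`w (s, v)` itself, or `distG s x + w (x, v)`) is kept. -/
def IsContraction {V : Type*} (E : Set (V × V)) (w : V × V → ℝ) (s : V) (X : Set V)
    (E' : Set (V × V)) (w' : V × V → ℝ) : Prop :=
  (∀ u v : V, ((u, v) ∈ E' ↔
      (u ∉ X ∧ v ∉ X ∧ ((u, v) ∈ E ∨ (u = s ∧ ∃ x ∈ X, (x, v) ∈ E))))) ∧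
  (∀ u v : V, (u, v) ∈ E' → u ≠ s → w' (u, v) = w (u, v)) ∧
  (∀ v : V, (s, v) ∈ E' →
      ((w' (s, v) : EReal) =
        sInf {r : EReal | ((s, v) ∈ E ∧ r = (w (s, v) : EReal)) ∨
          ∃ x ∈ X, (x, v) ∈ E ∧ r = distG E w s x + (w (x, v) : EReal)}))

section Aux
variable {V : Type*} {E : Set (V × V)} {w : V × V → ℝ}

lemma isPath_append {u m v : V} {P Q : List (V × V)}
    (h1 : IsPath E u m P) (h2 : IsPath E m v Q) : IsPath E u v (P ++ Q) := by
  induction h1 with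
  | nil => simpa using h2
  | cons he _ ih => exact IsPath.cons he (ih h2)

lemma pweight_nil : pweight w [] = 0 := rfl

lemma pweight_cons (e : V × V) (P : List (V × V)) :
    pweight w (e :: P) = w e + pweight w P := by simp [pweight]

lemma pweight_append (P Q : List (V × V)) :
    pweight w (P ++ Q) = pweight w P + pweight w Q := by simp [pweight]

lemma pweight_nonneg (hw : ∀ e ∈ E, 0 ≤ w e) {u v : V} {P : List (V × V)}
    (h : IsPath E u v P) : 0 ≤ pweight w P := by
  induction h with
  | nil => simp [pweight]
  | cons he _ ih => rw [pweight_cons]; exact add_nonneg (hw _ he) ih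

lemma distG_le {u v : V} {P : List (V × V)} (h : IsPath E u v P) :
    distG E w u v ≤ (pweight w P : EReal) :=
  sInf_le ⟨P, h, rfl⟩

lemma distG_nonneg (hw : ∀ e ∈ E, 0 ≤ w e) (u v : V) : 0 ≤ distG E w u v := by
  refine le_sInf ?_
  rintro r ⟨P, hP, rfl⟩
  exact_mod_cast pweight_nonneg hw hP

lemma distG_ne_bot (hw : ∀ e ∈ E, 0 ≤ w e) (u v : V) : distG E w u v ≠ ⊥ := by
  intro h
  have := distG_nonneg (w := w) hw u v
  rw [h] at this
  simp at this

lemma distG_self (hw : ∀ e ∈ E, 0 ≤ w e) (s : V) : distG E w s s = 0 := by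
  refine le_antisymm ?_ (distG_nonneg hw s s)
  simpa [pweight] using distG_le (w := w) (IsPath.nil (E := E) s)

lemma le_sInf_add_coe {a : EReal} {S : Set EReal} {c : ℝ}
    (h : ∀ x ∈ S, a ≤ x + (c : EReal)) : a ≤ sInf S + (c : EReal) := by
  have h1 : a - (c : EReal) ≤ sInf S :=
    le_sInf fun x hx =>
      (EReal.sub_le_iff_le_add (.inl (EReal.coe_ne_bot c)) (.inl (EReal.coe_ne_top c))).2 (h x hx)
  exact (EReal.sub_le_iff_le_add (.inl (EReal.coe_ne_bot c)) (.inl (EReal.coe_ne_top c))).1 h1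

lemma le_sInf_add {a c : EReal} {S : Set EReal} (hS : sInf S ≠ ⊥) (hc : c ≠ ⊥)
    (h : ∀ x ∈ S, a ≤ x + c) : a ≤ sInf S + c := by
  induction c using EReal.rec with
  | bot => exact absurd rfl hc
  | coe c => exact le_sInf_add_coe h
  | top => rw [EReal.add_top_of_ne_bot hS]; exact le_top

lemma distG_le_add_edge {u m : V} (he : (u, m) ∈ E) (z : V) :
    distG E w z m ≤ distG E w z u + (w (u, m) : EReal) := by
  conv_rhs => rw [distG]
  refine le_sInf_add_coe ?_
  rintro x ⟨P, hP, rfl⟩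
  have h2 := distG_le (w := w) (isPath_append hP (IsPath.cons he (IsPath.nil m)))
  rwa [pweight_append, pweight_cons, pweight_nil, add_zero, EReal.coe_add] at h2

lemma distG_edge_add_le {a m : V} (he : (a, m) ∈ E) (v : V) :
    distG E w a v ≤ (w (a, m) : EReal) + distG E w m v := by
  rw [add_comm]
  conv_rhs => rw [distG]
  refine le_sInf_add_coe ?_
  rintro x ⟨Q, hQ, rfl⟩
  have h2 := distG_le (w := w) (IsPath.cons he hQ)
  rw [pweight_cons, EReal.coe_add] at h2
  rwa [add_comm] at h2

lemma distG_triangle (hw : ∀ e ∈ E, 0 ≤ w e) (u x v : V) :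
    distG E w u v ≤ distG E w u x + distG E w x v := by
  conv_rhs => rw [distG]
  refine le_sInf_add ?_ (distG_ne_bot hw x v) ?_
  · exact distG_ne_bot hw u x
  rintro r ⟨P, hP, rfl⟩
  rw [add_comm]
  conv_rhs => rw [distG]
  refine le_sInf_add_coe ?_
  rintro q ⟨Q, hQ, rfl⟩
  have h2 := distG_le (w := w) (isPath_append hP hQ)
  rw [pweight_append, EReal.coe_add] at h2
  rwa [add_comm] at h2

end Aux

/-- Contracting the `t` nearest vertices `Near_t(s)` into the source `s` preserves
distances from `s`, and does not decrease distances between remaining vertices. -/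
theorem stmt2 {V : Type*} [Fintype V]
    (E : Set (V × V)) (w : V × V → ℝ)
    (hw : ∀ e ∈ E, 0 ≤ w e)
    (hA1 : Assumption1 E w) (hA2 : Assumption2 E w)
    (s : V) (hs : ∀ u : V, (u, s) ∉ E)
    (t : ℕ) (ht : 0 < t)
    (N : Finset V) (hN : IsNearSet E w s t N)
    (E' : Set (V × V)) (w' : V × V → ℝ)
    (hC : IsContraction E w s (↑N : Set V) E' w') :
    (∀ v : V, v ∉ N → distG E w s v = distG E' w' s v) ∧
    (∀ u v : V, u ∉ N → v ∉ N → distG E w u v ≤ distG E' w' u v) := by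
  obtain ⟨hC1, hC2, hC3⟩ := hC
  obtain ⟨hsN, hNreach, hNmin, hNcard⟩ := hN
  have hsN' : s ∉ (↑N : Set V) := fun h => hsN (Finset.mem_coe.1 h)
  -- key edge bound: relaxation along an edge of E' is valid for distances in E
  have key_edge : ∀ a m v₀ : V, (a, m) ∈ E' →
      distG E w a v₀ ≤ (w' (a, m) : EReal) + distG E w m v₀ := by
    intro a m v₀ he
    by_cases ha : a = s
    · rcases ha.symm with rfl
      rw [hC3 m he]
      refine le_sInf_add ?_ (distG_ne_bot hw m v₀) ?_
      · rw [← hC3 m he]; exact EReal.coe_ne_bot _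
      rintro r (⟨hE, rfl⟩ | ⟨x, hxN, hxE, rfl⟩)
      · exact distG_edge_add_le hE v₀
      · calc distG E w s v₀ ≤ distG E w s x + distG E w x v₀ := distG_triangle hw s x v₀
          _ ≤ distG E w s x + ((w (x, m) : EReal) + distG E w m v₀) :=
              add_le_add_right (distG_edge_add_le hxE v₀) _
          _ = distG E w s x + (w (x, m) : EReal) + distG E w m v₀ := (add_assoc _ _ _).symm
    · rcases (hC1 a m).1 he with ⟨haN, hmN, hE | ⟨has, _⟩⟩
      · rw [hC2 a m he ha]; exact distG_edge_add_le hE v₀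
      · exact absurd has ha
  -- part (b), pathwise
  have partb : ∀ u v : V, ∀ P : List (V × V), IsPath E' u v P →
      distG E w u v ≤ (pweight w' P : EReal) := by
    intro u v P hP
    induction hP with
    | nil z => simpa [pweight] using distG_le (w := w) (IsPath.nil (E := E) z)
    | @cons a m vv P₂ he hP₂ ih =>
        rw [pweight_cons, EReal.coe_add]
        calc distG E w a vv ≤ (w' (a, m) : EReal) + distG E w m vv := key_edge a m vv he
          _ ≤ (w' (a, m) : EReal) + (pweight w' P₂ : EReal) := add_le_add_right ih _
  have partb' : ∀ p q : V, distG E w p q ≤ distG E' w' p q := by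
    intro p q
    conv_rhs => rw [distG]
    refine le_sInf ?_
    rintro r ⟨P, hP, rfl⟩
    exact partb p q P hP
  -- part (a) hard direction, pathwise
  have keyA : ∀ u v : V, ∀ P : List (V × V), IsPath E u v P → v ∉ N →
      ((u = s ∨ u ∈ N) → distG E' w' s v ≤ distG E w s u + (pweight w P : EReal)) ∧
      (u ∉ N → distG E' w' s v ≤ distG E' w' s u + (pweight w P : EReal)) := by
    intro u v P hP
    induction hP with
    | nil z =>
        intro hzN
        constructor
        · rintro (hzs | hzN')
          · rcases hzs.symm with rfl
            calc distG E' w' s s ≤ ((pweight w' [] : ℝ) : EReal) :=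
                  distG_le (w := w') (IsPath.nil (E := E') s)
              _ = 0 := by simp [pweight]
              _ ≤ distG E w s s + ((pweight w [] : ℝ) : EReal) := by
                  simpa [pweight] using distG_nonneg hw s s
          · exact absurd hzN' hzN
        · intro _; simp [pweight]
    | @cons a m vv P₂ he hP₂ ih =>
        intro hvN
        obtain ⟨ihA, ihB⟩ := ih hvN
        have hpc : ((pweight w ((a, m) :: P₂) : ℝ) : EReal)
            = (w (a, m) : EReal) + (pweight w P₂ : EReal) := by
          rw [pweight_cons]; push_cast; ring
        by_cases hmN : m ∈ N
        · have hstep : distG E' w' s vv ≤ distG E w s m + (pweight w P₂ : EReal) :=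
            ihA (Or.inr hmN)
          have htri : distG E w s m ≤ distG E w s a + (w (a, m) : EReal) :=
            distG_le_add_edge he s
          constructor
          · intro _
            calc distG E' w' s vv ≤ distG E w s m + (pweight w P₂ : EReal) := hstep
              _ ≤ distG E w s a + (w (a, m) : EReal) + (pweight w P₂ : EReal) :=
                  add_le_add_left htri _
              _ = distG E w s a + ((pweight w ((a, m) :: P₂) : ℝ) : EReal) := by
                  rw [hpc, add_assoc]
          · intro haN
            calc distG E' w' s vv ≤ distG E w s m + (pweight w P₂ : EReal) := hstep
              _ ≤ distG E w s a + (w (a, m) : EReal) + (pweight w P₂ : EReal) :=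
                  add_le_add_left htri _
              _ ≤ distG E' w' s a + (w (a, m) : EReal) + (pweight w P₂ : EReal) := by
                  exact add_le_add_left (add_le_add_left (partb' s a) _) _
              _ = distG E' w' s a + ((pweight w ((a, m) :: P₂) : ℝ) : EReal) := by
                  rw [hpc, add_assoc]
        · have hmN' : m ∉ (↑N : Set V) := fun h => hmN (Finset.mem_coe.1 h)
          constructor
          · rintro (has | haN)
            · rcases has.symm with rfl
              have hsm' : (s, m) ∈ E' := (hC1 s m).2 ⟨hsN', hmN', Or.inl he⟩
              have hw'le : (w' (s, m) : EReal) ≤ distG E w s s + (w (s, m) : EReal) := by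
                rw [hC3 m hsm']
                calc sInf _ ≤ (w (s, m) : EReal) := sInf_le (Or.inl ⟨he, rfl⟩)
                  _ = 0 + (w (s, m) : EReal) := (zero_add _).symm
                  _ ≤ distG E w s s + (w (s, m) : EReal) :=
                      add_le_add_left (distG_nonneg hw s s) _
              have h1 : distG E' w' s m ≤ (w' (s, m) : EReal) := by
                simpa [pweight] using
                  distG_le (w := w') (IsPath.cons hsm' (IsPath.nil (E := E') m))
              calc distG E' w' s vv ≤ distG E' w' s m + (pweight w P₂ : EReal) := ihB hmN
                _ ≤ (w' (s, m) : EReal) + (pweight w P₂ : EReal) := add_le_add_left h1 _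
                _ ≤ distG E w s s + (w (s, m) : EReal) + (pweight w P₂ : EReal) :=
                    add_le_add_left hw'le _
                _ = distG E w s s + ((pweight w ((s, m) :: P₂) : ℝ) : EReal) := by
                    rw [hpc, add_assoc]
            · have hsm' : (s, m) ∈ E' := (hC1 s m).2 ⟨hsN', hmN', Or.inr ⟨rfl, a, Finset.mem_coe.2 haN, he⟩⟩
              have hw'le : (w' (s, m) : EReal) ≤ distG E w s a + (w (a, m) : EReal) := by
                rw [hC3 m hsm']
                exact sInf_le (Or.inr ⟨a, Finset.mem_coe.2 haN, he, rfl⟩)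
              have h1 : distG E' w' s m ≤ (w' (s, m) : EReal) := by
                simpa [pweight] using
                  distG_le (w := w') (IsPath.cons hsm' (IsPath.nil (E := E') m))
              calc distG E' w' s vv ≤ distG E' w' s m + (pweight w P₂ : EReal) := ihB hmN
                _ ≤ (w' (s, m) : EReal) + (pweight w P₂ : EReal) := add_le_add_left h1 _
                _ ≤ distG E w s a + (w (a, m) : EReal) + (pweight w P₂ : EReal) :=
                    add_le_add_left hw'le _
                _ = distG E w s a + ((pweight w ((a, m) :: P₂) : ℝ) : EReal) := by
                    rw [hpc, add_assoc]
          · intro haN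
            have haN' : a ∉ (↑N : Set V) := fun h => haN (Finset.mem_coe.1 h)
            have hedge : (a, m) ∈ E' := (hC1 a m).2 ⟨haN', hmN', Or.inl he⟩
            have hw'le : (w' (a, m) : EReal) ≤ (w (a, m) : EReal) := by
              by_cases has : a = s
              · subst has; rw [hC3 m hedge]; exact sInf_le (Or.inl ⟨he, rfl⟩)
              · rw [hC2 a m hedge has]
            have htri' : distG E' w' s m ≤ distG E' w' s a + (w' (a, m) : EReal) :=
              distG_le_add_edge hedge s
            calc distG E' w' s vv ≤ distG E' w' s m + (pweight w P₂ : EReal) := ihB hmN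
              _ ≤ distG E' w' s a + (w' (a, m) : EReal) + (pweight w P₂ : EReal) :=
                  add_le_add_left htri' _
              _ ≤ distG E' w' s a + (w (a, m) : EReal) + (pweight w P₂ : EReal) :=
                  add_le_add_left (add_le_add_right hw'le _) _
              _ = distG E' w' s a + ((pweight w ((a, m) :: P₂) : ℝ) : EReal) := by
                  rw [hpc, add_assoc]
  constructor
  · intro v hv
    refine le_antisymm (partb' s v) ?_
    conv_rhs => rw [distG]
    refine le_sInf ?_
    rintro r ⟨P, hP, rfl⟩
    have h2 := (keyA s v P hP hv).1 (Or.inl rfl)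
    rwa [distG_self hw s, zero_add] at h2
  · intro u v _ _
    exact partb' u v
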